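/- The downward closure of the maximal multi-property predecessor equals the standard multi-property predecessor of the downward closure: for every downward-closed relation output, ↓(PreMMC(E)) = PreMC(↓(E)) for all E ⊆ S × 𝒫(Φ). -/
import Mathlib


def PreMC {S Φ X Y : Type*} (δ : S → Y → X → S) (E : Set (S × Set Φ)) :
    Set (S × Set Φ) :=
  {p | ∃ y : Y, ∀ x : X, (δ p.1 y x, p.2) ∈ E}

def PreMMC {S Φ X Y : Type*} (δ : S → Y → X → S) (E : Set (S × Set Φ)) :
    Set (S × Set Φ) :=
  {p | ∃ y : Y, ∀ x : X, ∃ D : Set Φ, p.2 ⊆ D ∧ (δ p.1 y x, D) ∈ E}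

def dcl {S Φ : Type*} (E : Set (S × Set Φ)) : Set (S × Set Φ) :=
  {p | ∃ C : Set Φ, (p.1, C) ∈ E ∧ p.2 ⊆ C}

theorem dcl_preMMC {S Φ X Y : Type*} [Fintype S] [Fintype Φ] [Fintype X] [Fintype Y]
    (δ : S → Y → X → S) (E : Set (S × Set Φ)) :
    dcl (PreMMC δ E) = PreMC δ (dcl E) := by
  ext ⟨s, D⟩
  constructor
  · rintro ⟨C, ⟨y, h⟩, hDC⟩
    exact ⟨y, fun x => by
      obtain ⟨D', hCD', hE⟩ := h x
      exact ⟨D', hE, hDC.trans hCD'⟩⟩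
  · rintro ⟨y, h⟩
    exact ⟨D, ⟨y, fun x => by
      obtain ⟨D', hE, hDD'⟩ := h x
      exact ⟨D', hDD', hE⟩⟩, subset_rfl⟩
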